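/- Let X be a two-sided subshift over a finite alphabet, let g : X → ℝ and h : X → ℝ be continuous with h(x) < 0 for all x ∈ X, and let t ∈ ℝ. Then for every ε > 0 there exists r* ∈ (0, r_0) such that for all 0 < r < r* one has r^{t+ε/2}·Θ_r ≤ Γ_r ≤ r^{t−ε/2}·Θ_r, where Γ_r = Σ_{I∈A_r} sup_{x∈[I]∩X} exp(S_{|I|}(g+th)(x)) and Θ_r = Σ_{I∈A_r} sup_{x∈[I]∩X} exp(S_{|I|}g(x)). -/

import Mathlib

open scoped ENNReal

/-- The shift map on the two-sided full shift over the alphabet `Fin l`. -/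
def shiftMap (l : ℕ) : (ℤ → Fin l) → (ℤ → Fin l) := fun w j => w (j + 1)

/-- The Birkhoff sum `S_n φ (x) = ∑_{j=0}^{n-1} φ (σ^j x)`. -/
noncomputable def birkSum (l : ℕ) (φ : (ℤ → Fin l) → ℝ) (n : ℕ) (x : ℤ → Fin l) : ℝ :=
  ∑ j ∈ Finset.range n, φ ((shiftMap l)^[j] x)

/-- The cylinder `[I]` of a finite word `I = i₀ i₁ ⋯ i_{n-1}`. -/
def cylinder (l : ℕ) (I : List (Fin l)) : Set (ℤ → Fin l) :=
  {w | ∀ (j : ℕ) (hj : j < I.length), w (j : ℤ) = I.get ⟨j, hj⟩}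

/-- `X*` : the finite words allowed in `X`. -/
def words (l : ℕ) (X : Set (ℤ → Fin l)) : Set (List (Fin l)) :=
  {I | I ≠ [] ∧ (cylinder l I ∩ X).Nonempty}

/-- `sup_{x ∈ [I] ∩ X} exp (S_{|I|} φ (x))`. -/
noncomputable def supExp (l : ℕ) (X : Set (ℤ → Fin l)) (φ : (ℤ → Fin l) → ℝ)
    (I : List (Fin l)) : ℝ :=
  sSup ((fun x => Real.exp (birkSum l φ I.length x)) '' (cylinder l I ∩ X))

/-- `r₀ = sup_{x ∈ X} exp (h x)`. -/
noncomputable def rZero (l : ℕ) (X : Set (ℤ → Fin l)) (h : (ℤ → Fin l) → ℝ) : ℝ :=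
  sSup ((fun x => Real.exp (h x)) '' X)

/-- The family of words `A_r`.  (For a word of length `1` the second condition reads `r ≤ 1`,
since the `dropLast` of a one-letter word is the empty word, whose cylinder is everything and
whose Birkhoff sum is `0`.) -/
noncomputable def wordsAt (l : ℕ) (X : Set (ℤ → Fin l)) (h : (ℤ → Fin l) → ℝ) (r : ℝ) :
    Set (List (Fin l)) :=
  {I | I ∈ words l X ∧ supExp l X h I < r ∧ r ≤ supExp l X h I.dropLast}

/-- The weight `exp (-λ |I|) · sup_{x ∈ [I] ∩ X} exp (S_{|I|} φ (x))` of a word, in `ℝ≥0∞`. -/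
noncomputable def wt (l : ℕ) (X : Set (ℤ → Fin l)) (φ : (ℤ → Fin l) → ℝ)
    (lam : ℝ) (I : List (Fin l)) : ℝ≥0∞ :=
  ENNReal.ofReal (Real.exp (-lam * (I.length : ℝ)) * supExp l X φ I)

/-- `m_P(Z, λ, φ, n)` : infimum over countable covers of `Z` by cylinders of allowed words of
length at least `n`. -/
noncomputable def mPaux (l : ℕ) (X : Set (ℤ → Fin l)) (φ : (ℤ → Fin l) → ℝ)
    (Z : Set (ℤ → Fin l)) (lam : ℝ) (n : ℕ) : ℝ≥0∞ :=
  ⨅ (T : Set (List (Fin l))) (_ : T.Countable)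
    (_ : ∀ I ∈ T, I ∈ words l X ∧ n ≤ I.length)
    (_ : Z ⊆ ⋃ I ∈ T, cylinder l I),
    ∑' I : T, wt l X φ lam I.1

/-- `m_P(Z, λ, φ) = lim_{n → ∞} m_P(Z, λ, φ, n)` (a monotone limit, hence a supremum). -/
noncomputable def mP (l : ℕ) (X : Set (ℤ → Fin l)) (φ : (ℤ → Fin l) → ℝ)
    (Z : Set (ℤ → Fin l)) (lam : ℝ) : ℝ≥0∞ :=
  ⨆ n : ℕ, mPaux l X φ Z lam n

/-- The topological pressure `P_Z(σ, φ)` of `φ` on `Z`. -/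
noncomputable def press (l : ℕ) (X : Set (ℤ → Fin l)) (φ : (ℤ → Fin l) → ℝ)
    (Z : Set (ℤ → Fin l)) : ℝ :=
  sInf {lam : ℝ | mP l X φ Z lam = 0}

/-- `m̃_P(Z, λ, φ, r)` : infimum over countable covers of `Z` by cylinders of words belonging to
`A_{r'}` for some `0 < r' ≤ r`. -/
noncomputable def mtPaux (l : ℕ) (X : Set (ℤ → Fin l)) (h φ : (ℤ → Fin l) → ℝ)
    (Z : Set (ℤ → Fin l)) (lam : ℝ) (r : ℝ) : ℝ≥0∞ :=
  ⨅ (T : Set (List (Fin l))) (_ : T.Countable)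
    (_ : ∀ I ∈ T, ∃ r' : ℝ, 0 < r' ∧ r' ≤ r ∧ I ∈ wordsAt l X h r')
    (_ : Z ⊆ ⋃ I ∈ T, cylinder l I),
    ∑' I : T, wt l X φ lam I.1

/-- `m̃_P(Z, λ, φ) = lim_{r → 0} m̃_P(Z, λ, φ, r)` (a monotone limit, hence a supremum). -/
noncomputable def mtP (l : ℕ) (X : Set (ℤ → Fin l)) (h φ : (ℤ → Fin l) → ℝ)
    (Z : Set (ℤ → Fin l)) (lam : ℝ) : ℝ≥0∞ :=
  ⨆ (r : ℝ) (_ : 0 < r), mtPaux l X h φ Z lam r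

/-- The pressure `P̃_Z(σ, φ)`. -/
noncomputable def presst (l : ℕ) (X : Set (ℤ → Fin l)) (h φ : (ℤ → Fin l) → ℝ)
    (Z : Set (ℤ → Fin l)) : ℝ :=
  sInf {lam : ℝ | mtP l X h φ Z lam = 0}


set_option linter.unreachableTactic false
set_option linter.unusedTactic false

lemma shift_iter (l m : ℕ) (x : ℤ → Fin l) (j : ℤ) :
    (shiftMap l)^[m] x j = x (j + m) := by
  induction m generalizing x with
  | zero => simp
  | succ m ih =>
    rw [Function.iterate_succ_apply, ih]
    simp only [shiftMap]
    congr 1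
    push_cast
    ring

lemma shift_cont (l : ℕ) : Continuous (shiftMap l) := by
  apply continuous_pi; intro j; exact continuous_apply _

lemma shift_iter_cont (l m : ℕ) : Continuous ((shiftMap l)^[m]) :=
  (shift_cont l).iterate m

lemma shift_mem (l : ℕ) (X : Set (ℤ → Fin l)) (hXinv : shiftMap l '' X = X)
    (m : ℕ) {x : ℤ → Fin l} (hx : x ∈ X) : (shiftMap l)^[m] x ∈ X := by
  induction m with
  | zero => simpa
  | succ m ih =>
    rw [Function.iterate_succ_apply']
    rw [← hXinv]
    exact Set.mem_image_of_mem _ ih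

lemma cylinder_closed (l : ℕ) (I : List (Fin l)) : IsClosed (cylinder l I) := by
  have : cylinder l I = ⋂ (j : Fin I.length), {w : ℤ → Fin l | w ((j : ℕ) : ℤ) = I.get j} := by
    ext w
    simp only [cylinder, Set.mem_setOf_eq, Set.mem_iInter]
    exact ⟨fun H j => H j j.2, fun H j hj => H ⟨j, hj⟩⟩
  rw [this]
  exact isClosed_iInter fun j =>
    isClosed_singleton.preimage (continuous_apply ((j : ℕ) : ℤ))

lemma birk_contOn (l : ℕ) (X : Set (ℤ → Fin l)) (hXinv : shiftMap l '' X = X)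
    (φ : (ℤ → Fin l) → ℝ) (hφ : ContinuousOn φ X) (n : ℕ) :
    ContinuousOn (birkSum l φ n) X := by
  apply continuousOn_finset_sum
  intro j _
  exact hφ.comp (shift_iter_cont l j).continuousOn fun x hx => shift_mem l X hXinv j hx

lemma supExp_spec (l : ℕ) (X : Set (ℤ → Fin l)) (hXcpt : IsCompact X)
    (hXinv : shiftMap l '' X = X) (φ : (ℤ → Fin l) → ℝ) (hφ : ContinuousOn φ X)
    (I : List (Fin l)) (hne : (cylinder l I ∩ X).Nonempty) :
    ∃ x ∈ cylinder l I ∩ X, supExp l X φ I = Real.exp (birkSum l φ I.length x) ∧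
      ∀ y ∈ cylinder l I ∩ X,
        Real.exp (birkSum l φ I.length y) ≤ Real.exp (birkSum l φ I.length x) := by
  have hS : IsCompact (cylinder l I ∩ X) := hXcpt.inter_left (cylinder_closed l I)
  have hc : ContinuousOn (fun x => Real.exp (birkSum l φ I.length x)) (cylinder l I ∩ X) :=
    (Real.continuous_exp.comp_continuousOn
      ((birk_contOn l X hXinv φ hφ I.length).mono Set.inter_subset_right))
  obtain ⟨x, hxS, hmax⟩ := hS.exists_isMaxOn hne hc
  refine ⟨x, hxS, ?_, fun y hy => hmax hy⟩
  apply le_antisymm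
  · exact csSup_le (hne.image _) (by rintro z ⟨y, hy, rfl⟩; exact hmax hy)
  · exact le_csSup ⟨_, by rintro z ⟨y, hy, rfl⟩; exact hmax hy⟩ ⟨x, hxS, rfl⟩

noncomputable instance finUniformSpace (l : ℕ) : UniformSpace (Fin l) :=
  (⊥ : UniformSpace (Fin l)).replaceTopology (by
    rw [DiscreteTopology.eq_bot (α := Fin l)]
    rfl)

lemma unif_cont (l : ℕ) (X : Set (ℤ → Fin l)) (hXcpt : IsCompact X)
    (h : (ℤ → Fin l) → ℝ) (hh : ContinuousOn h X) {δ : ℝ} (hδ : 0 < δ) :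
    ∃ k : ℕ, ∀ x ∈ X, ∀ y ∈ X, (∀ j : ℤ, j.natAbs ≤ k → x j = y j) → |h x - h y| ≤ δ := by
  have UC := hXcpt.uniformContinuousOn_of_continuous hh
  have hE : {q : ℝ × ℝ | dist q.1 q.2 < δ} ∈ uniformity ℝ := Metric.dist_mem_uniformity hδ
  have hP := UC hE
  rw [Filter.mem_map, Filter.mem_inf_principal] at hP
  rw [Pi.uniformity (fun _ : ℤ => Fin l)] at hP
  rw [Filter.mem_iInf'] at hP
  obtain ⟨I, hIfin, V, hV, hVuniv, -, hU⟩ := hP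
  refine ⟨hIfin.toFinset.sup Int.natAbs, fun x hx y hy hagree => ?_⟩
  have hxy : (x, y) ∈ ⋂ i, V i := by
    refine Set.mem_iInter.2 fun i => ?_
    by_cases hi : i ∈ I
    · obtain ⟨W, hW, hWV⟩ := hV i
      apply hWV
      have : x i = y i := hagree i (Finset.le_sup (hIfin.mem_toFinset.2 hi))
      simp only [Set.mem_preimage, this]
      exact refl_mem_uniformity hW
    · simp [hVuniv i hi]
  rw [← hU] at hxy
  have : dist (h x) (h y) < δ := hxy (Set.mk_mem_prod hx hy)
  rw [Real.dist_eq] at this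
  exact this.le

lemma birk_var (l : ℕ) (X : Set (ℤ → Fin l)) (hXinv : shiftMap l '' X = X)
    (h : (ℤ → Fin l) → ℝ) (M : ℝ) (hM : ∀ x ∈ X, |h x| ≤ M)
    (δ : ℝ) (hδ : 0 ≤ δ) (k : ℕ)
    (hk : ∀ x ∈ X, ∀ y ∈ X, (∀ j : ℤ, j.natAbs ≤ k → x j = y j) → |h x - h y| ≤ δ)
    (n : ℕ) (x : ℤ → Fin l) (hx : x ∈ X) (y : ℤ → Fin l) (hy : y ∈ X)
    (hagree : ∀ j : ℕ, j < n → x (j : ℤ) = y (j : ℤ)) :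
    |birkSum l h n x - birkSum l h n y| ≤ n * δ + 2 * k * (2 * M) := by
  have hM0 : 0 ≤ M := le_trans (abs_nonneg _) (hM x hx)
  set d : ℕ → ℝ := fun j => h ((shiftMap l)^[j] x) - h ((shiftMap l)^[j] y) with hd
  have key : birkSum l h n x - birkSum l h n y = ∑ j ∈ Finset.range n, d j := by
    rw [birkSum, birkSum, ← Finset.sum_sub_distrib]
  rw [key]
  refine le_trans (Finset.abs_sum_le_sum_abs _ _) ?_
  set P : ℕ → Prop := fun j => k ≤ j ∧ j + k < n with hP
  have hgood : ∀ j ∈ (Finset.range n).filter P, |d j| ≤ δ := by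
    intro j hj
    simp only [Finset.mem_filter, Finset.mem_range, hP] at hj
    obtain ⟨hjn, hkj, hjk⟩ := hj
    apply hk _ (shift_mem l X hXinv j hx) _ (shift_mem l X hXinv j hy)
    intro m hm
    rw [shift_iter, shift_iter]
    have h1 : (0 : ℤ) ≤ m + j := by omega
    have h2 : m + j < n := by omega
    obtain ⟨j', hj'⟩ := Int.eq_ofNat_of_zero_le h1
    rw [hj']
    exact hagree j' (by omega)
  have hbad : ∀ j ∈ (Finset.range n).filter (fun j => ¬ P j), |d j| ≤ 2 * M := by
    intro j hj
    simp only [Finset.mem_filter, Finset.mem_range] at hj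
    calc |d j| ≤ |h ((shiftMap l)^[j] x)| + |h ((shiftMap l)^[j] y)| := abs_sub _ _
      _ ≤ M + M := add_le_add (hM _ (shift_mem l X hXinv j hx)) (hM _ (shift_mem l X hXinv j hy))
      _ = 2 * M := by ring
  have hcard : ((Finset.range n).filter (fun j => ¬ P j)).card ≤ 2 * k := by
    have hsub : (Finset.range n).filter (fun j => ¬ P j) ⊆
        Finset.range k ∪ Finset.Ico (n - k) n := by
      intro j hj
      simp only [Finset.mem_filter, Finset.mem_range, hP, not_and, not_lt] at hj
      simp only [Finset.mem_union, Finset.mem_range, Finset.mem_Ico]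
      omega
    refine le_trans (Finset.card_le_card hsub) (le_trans (Finset.card_union_le _ _) ?_)
    rw [Finset.card_range, Nat.card_Ico]
    omega
  calc ∑ j ∈ Finset.range n, |d j|
      = ∑ j ∈ (Finset.range n).filter P, |d j|
        + ∑ j ∈ (Finset.range n).filter (fun j => ¬ P j), |d j| :=
        (Finset.sum_filter_add_sum_filter_not _ _ _).symm
    _ ≤ ((Finset.range n).filter P).card * δ
        + ((Finset.range n).filter (fun j => ¬ P j)).card * (2 * M) := by
        apply add_le_add
        · exact le_of_le_of_eq (Finset.sum_le_card_nsmul _ _ δ hgood) (by simp [nsmul_eq_mul])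
        · exact le_of_le_of_eq (Finset.sum_le_card_nsmul _ _ (2*M) hbad) (by simp [nsmul_eq_mul])
    _ ≤ n * δ + 2 * k * (2 * M) := by
        apply add_le_add
        · apply mul_le_mul_of_nonneg_right _ hδ
          have := Finset.card_filter_le (Finset.range n) P
          rw [Finset.card_range] at this
          exact_mod_cast this
        · apply mul_le_mul_of_nonneg_right _ (by linarith)
          exact_mod_cast hcard

lemma cylinder_dropLast (l : ℕ) (I : List (Fin l)) :
    cylinder l I ⊆ cylinder l I.dropLast := by
  intro w hw j hj
  have hj' : j < I.length := lt_of_lt_of_le hj (by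
    rw [List.length_dropLast]; omega)
  rw [List.get_eq_getElem, List.getElem_dropLast]
  exact hw j hj'

lemma birk_add (l : ℕ) (g h : (ℤ → Fin l) → ℝ) (t : ℝ) (n : ℕ) (x : ℤ → Fin l) :
    birkSum l (fun z => g z + t * h z) n x = birkSum l g n x + t * birkSum l h n x := by
  simp [birkSum, Finset.sum_add_distrib, Finset.mul_sum]

/-- Key per-word estimate. -/
lemma key_word (l : ℕ) (X : Set (ℤ → Fin l)) (hXcpt : IsCompact X)
    (hXinv : shiftMap l '' X = X) (h : (ℤ → Fin l) → ℝ) (hh : ContinuousOn h X)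
    (M : ℝ) (hM : ∀ x ∈ X, |h x| ≤ M)
    (a : ℝ) (hha : ∀ x ∈ X, h x ≤ -a)
    (δ : ℝ) (hδ : 0 ≤ δ) (k : ℕ)
    (hk : ∀ x ∈ X, ∀ y ∈ X, (∀ j : ℤ, j.natAbs ≤ k → x j = y j) → |h x - h y| ≤ δ)
    (r : ℝ) (hr0 : 0 < r) (I : List (Fin l)) (hI : I ∈ wordsAt l X h r) :
    (((I.length - 1 : ℕ) : ℝ) * a ≤ -Real.log r) ∧
    ∀ x ∈ cylinder l I ∩ X,
      |birkSum l h I.length x - Real.log r| ≤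
        ((I.length - 1 : ℕ) : ℝ) * δ + (2 * k * (2 * M) + M) := by
  obtain ⟨⟨hIne, hScyl⟩, hsup, hsup'⟩ := hI
  set n := I.length with hn
  have hn1 : 1 ≤ n := by
    rw [hn]; cases I with
    | nil => exact absurd rfl hIne
    | cons _ _ => simp
  have hn' : I.dropLast.length = n - 1 := by rw [List.length_dropLast]
  -- the maximum point on the dropLast cylinder
  have hS'ne : (cylinder l I.dropLast ∩ X).Nonempty :=
    hScyl.mono (Set.inter_subset_inter_left _ (cylinder_dropLast l I))
  obtain ⟨y, hyS, hysup, hymax⟩ := supExp_spec l X hXcpt hXinv h hh I.dropLast hS'ne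
  have hry : Real.log r ≤ birkSum l h (n - 1) y := by
    have : r ≤ Real.exp (birkSum l h I.dropLast.length y) := hysup ▸ hsup'
    rw [hn'] at this
    calc Real.log r ≤ Real.log (Real.exp (birkSum l h (n-1) y)) :=
          Real.log_le_log hr0 this
      _ = _ := Real.log_exp _
  constructor
  · -- length bound
    have hby : birkSum l h (n - 1) y ≤ ((n - 1 : ℕ) : ℝ) * (-a) := by
      rw [birkSum]
      calc ∑ j ∈ Finset.range (n-1), h ((shiftMap l)^[j] y)
          ≤ (Finset.range (n-1)).card • (-a) := by
            apply Finset.sum_le_card_nsmul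
            intro j _
            exact hha _ (shift_mem l X hXinv j hyS.2)
        _ = ((n - 1 : ℕ) : ℝ) * (-a) := by simp [nsmul_eq_mul]
    nlinarith [hry, hby]
  · intro x hxS
    have hxS' : x ∈ cylinder l I.dropLast ∩ X :=
      ⟨cylinder_dropLast l I hxS.1, hxS.2⟩
    -- upper bound
    have hup : birkSum l h n x ≤ Real.log r := by
      obtain ⟨z, hzS, hzsup, hzmax⟩ := supExp_spec l X hXcpt hXinv h hh I hScyl
      have h1 : Real.exp (birkSum l h n x) < r := lt_of_le_of_lt (hzmax x hxS) (hzsup ▸ hsup)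
      have := Real.log_lt_log (Real.exp_pos _) h1
      rw [Real.log_exp] at this
      exact this.le
    -- lower bound
    have hagree : ∀ j : ℕ, j < n - 1 → x (j : ℤ) = y (j : ℤ) := by
      intro j hj
      have hj' : j < I.dropLast.length := by omega
      rw [hxS'.1 j hj', hyS.1 j hj']
    have hvar := birk_var l X hXinv h M hM δ hδ k hk (n-1) x hxS.2 y hyS.2 hagree
    have hMx : |h ((shiftMap l)^[n-1] x)| ≤ M := hM _ (shift_mem l X hXinv (n-1) hxS.2)
    have hsplit : birkSum l h n x = birkSum l h (n-1) x + h ((shiftMap l)^[n-1] x) := by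
      rw [birkSum, birkSum]
      have : n = (n-1) + 1 := by omega
      rw [this, Finset.sum_range_succ]
      congr 1 <;> · congr 1; omega
    rw [abs_le]
    constructor
    · rw [abs_le] at hvar hMx
      have : birkSum l h (n-1) x ≥ Real.log r - (((n-1:ℕ):ℝ) * δ + 2*k*(2*M)) := by
        linarith [hry, hvar.1]
      rw [hsplit]
      push_cast
      push_cast at this
      linarith [hMx.1]
    · have hδM : 0 ≤ ((n-1:ℕ):ℝ) * δ + (2*k*(2*M) + M) := by
        have hM0 : (0:ℝ) ≤ M := le_trans (abs_nonneg _) (hM x hxS.2)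
        positivity
      linarith [hup]


/-- For every `ε > 0` there is `r* ∈ (0, r₀)` such that for all `0 < r < r*`
one has `r^(t+ε/2) · Θ_r ≤ Γ_r ≤ r^(t-ε/2) · Θ_r`. -/
theorem Gamma_between_rpow_mul_Theta (l : ℕ) (hl : 1 ≤ l) (X : Set (ℤ → Fin l))
    (hXne : X.Nonempty) (hXcpt : IsCompact X) (hXinv : shiftMap l '' X = X)
    (g h : (ℤ → Fin l) → ℝ) (hg : ContinuousOn g X) (hh : ContinuousOn h X)
    (hneg : ∀ x ∈ X, h x < 0) (t : ℝ) :
    ∀ ε : ℝ, 0 < ε → ∃ rstar : ℝ, 0 < rstar ∧ rstar < rZero l X h ∧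
      ∀ r : ℝ, 0 < r → r < rstar →
        r ^ (t + ε / 2) * (∑' I : wordsAt l X h r, supExp l X g I.1) ≤
            (∑' I : wordsAt l X h r, supExp l X (fun x => g x + t * h x) I.1) ∧
          (∑' I : wordsAt l X h r, supExp l X (fun x => g x + t * h x) I.1) ≤
            r ^ (t - ε / 2) * (∑' I : wordsAt l X h r, supExp l X g I.1) := by
  unfold rZero
  intro ε hε
  obtain ⟨x₀, hx₀⟩ := hXne
  -- a bound M for |h|
  obtain ⟨M, hM⟩ : ∃ M, ∀ x ∈ X, |h x| ≤ M := by
    obtain ⟨M, hM⟩ := (hXcpt.image_of_continuousOn hh.abs).bddAbove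
    exact ⟨M, fun x hx => hM ⟨x, hx, rfl⟩⟩
  have hM0 : 0 ≤ M := le_trans (abs_nonneg _) (hM x₀ hx₀)
  -- a : uniform negative upper bound for h
  obtain ⟨z, hz, hzmax⟩ := hXcpt.exists_isMaxOn ⟨x₀, hx₀⟩ hh
  set a := -h z with hadef
  have ha : 0 < a := by simp only [hadef]; linarith [hneg z hz]
  have hha : ∀ x ∈ X, h x ≤ -a := by
    intro x hx
    rw [hadef, neg_neg]
    exact hzmax hx
  -- δ and k
  set τ := |t| + 1 with hτdef
  have hτ0 : 0 < τ := by positivity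
  have htτ : |t| ≤ τ := by rw [hτdef]; linarith
  set δ := a * ε / (4 * τ) with hδdef
  have hδ : 0 < δ := by positivity
  obtain ⟨k, hk⟩ := unif_cont l X hXcpt h hh hδ
  set C₁ := 2 * (k:ℝ) * (2 * M) + M with hC₁def
  have hC₁ : 0 ≤ C₁ := by positivity
  set L₀ := 4 * τ * (C₁ + 1) / ε with hL₀def
  have hL₀ : 0 < L₀ := by positivity
  -- rZero is positive
  have hub : ∀ w ∈ (fun x => Real.exp (h x)) '' X, w ≤ 1 := by
    rintro _ ⟨x, hx, rfl⟩
    exact (Real.exp_lt_one_iff.mpr (hneg x hx)).le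
  have hr0pos : 0 < sSup ((fun x => Real.exp (h x)) '' X) :=
    lt_of_lt_of_le (Real.exp_pos (h x₀)) (le_csSup ⟨1, hub⟩ ⟨x₀, hx₀, rfl⟩)
  refine ⟨min (Real.exp (-L₀)) (sSup ((fun x => Real.exp (h x)) '' X) / 2),
    lt_min (Real.exp_pos _) (by linarith), lt_of_le_of_lt (min_le_right _ _) (by linarith), ?_⟩
  intro r hr hrlt
  have hrexp : r < Real.exp (-L₀) := lt_of_lt_of_le hrlt (min_le_left _ _)
  set L := -Real.log r with hLdef
  have hLL₀ : L₀ ≤ L := by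
    have := Real.log_lt_log hr hrexp
    rw [Real.log_exp] at this
    rw [hLdef]; linarith
  have hL0 : 0 < L := lt_of_lt_of_le hL₀ hLL₀
  -- finiteness of the word family
  have hfin : (wordsAt l X h r).Finite := by
    apply (List.finite_length_le (Fin l) (⌈L / a⌉₊ + 1)).subset
    intro I hI
    have h1 := (key_word l X hXcpt hXinv h hh M hM a hha δ hδ.le k hk r hr I hI).1
    simp only [Set.mem_setOf_eq]
    have h2 : ((I.length - 1 : ℕ) : ℝ) ≤ L / a := by
      rw [le_div_iff₀ ha]
      rw [hLdef]
      exact h1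
    have h3 : ((I.length - 1 : ℕ) : ℝ) ≤ (⌈L / a⌉₊ : ℝ) := h2.trans (Nat.le_ceil _)
    have h4 : I.length - 1 ≤ ⌈L / a⌉₊ := by exact_mod_cast h3
    omega
  haveI := hfin.to_subtype
  -- termwise inequalities
  have hterm : ∀ I ∈ wordsAt l X h r,
      r ^ (t + ε / 2) * supExp l X g I ≤ supExp l X (fun x => g x + t * h x) I ∧
      supExp l X (fun x => g x + t * h x) I ≤ r ^ (t - ε / 2) * supExp l X g I := by
    intro I hI
    obtain ⟨hlen, hest⟩ := key_word l X hXcpt hXinv h hh M hM a hha δ hδ.le k hk r hr I hI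
    have hne : (cylinder l I ∩ X).Nonempty := hI.1.2
    set n := I.length with hn
    -- pointwise exponent bounds
    have hpt : ∀ x ∈ cylinder l I ∩ X,
        (t + ε / 2) * Real.log r ≤ t * birkSum l h n x ∧
          t * birkSum l h n x ≤ (t - ε / 2) * Real.log r := by
      intro x hx
      have hD := hest x hx
      set Dn := ((n - 1 : ℕ) : ℝ) with hDn
      have hDn0 : 0 ≤ Dn := by positivity
      have habs : |t * birkSum l h n x - t * Real.log r| ≤ ε / 2 * L := by
        rw [← mul_sub, abs_mul]
        have step0 : |t| * |birkSum l h n x - Real.log r| ≤ |t| * (Dn * δ + C₁) :=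
          mul_le_mul_of_nonneg_left hD (abs_nonneg t)
        have h1 : Dn ≤ L / a := by rw [le_div_iff₀ ha, hLdef]; exact hlen
        have e1 : |t| * (Dn * δ) ≤ ε / 4 * L := by
          have h2 : |t| * (Dn * δ) ≤ |t| * ((L / a) * δ) :=
            mul_le_mul_of_nonneg_left (mul_le_mul_of_nonneg_right h1 hδ.le) (abs_nonneg t)
          have h3 : (L / a) * δ = L * ε / (4 * τ) := by
            rw [hδdef]; field_simp
          have h4 : |t| * (L * ε / (4 * τ)) ≤ τ * (L * ε / (4 * τ)) := by
            apply mul_le_mul_of_nonneg_right htτ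
            positivity
          have h5 : τ * (L * ε / (4 * τ)) = ε / 4 * L := by
            field_simp
          rw [h3] at h2
          linarith
        have e2 : |t| * C₁ ≤ ε / 4 * L := by
          have h6 : |t| * C₁ ≤ τ * (C₁ + 1) := by nlinarith [abs_nonneg t]
          have h7 : τ * (C₁ + 1) = ε * L₀ / 4 := by
            rw [hL₀def]; field_simp
          nlinarith
        calc |t| * |birkSum l h n x - Real.log r| ≤ |t| * (Dn * δ + C₁) := step0
          _ = |t| * (Dn * δ) + |t| * C₁ := by ring
          _ ≤ ε / 4 * L + ε / 4 * L := add_le_add e1 e2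
          _ = ε / 2 * L := by ring
      rw [abs_le] at habs
      have eL : ε / 2 * L = -(ε / 2 * Real.log r) := by rw [hLdef]; ring
      constructor
      · have : (t + ε / 2) * Real.log r = t * Real.log r + ε / 2 * Real.log r := by ring
        rw [this]; linarith [habs.1]
      · have : (t - ε / 2) * Real.log r = t * Real.log r - ε / 2 * Real.log r := by ring
        rw [this]; linarith [habs.2]
    have hGcont : ContinuousOn (fun x => g x + t * h x) X :=
      hg.add (continuousOn_const.mul hh)
    obtain ⟨xgt, hxgtS, hgtsup, hgtmax⟩ := supExp_spec l X hXcpt hXinv _ hGcont I hne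
    obtain ⟨xg, hxgS, hgsup, hgmax⟩ := supExp_spec l X hXcpt hXinv g hg I hne
    have hrpow : ∀ s : ℝ, r ^ s = Real.exp (s * Real.log r) := fun s => by
      rw [Real.rpow_def_of_pos hr, mul_comm]
    constructor
    · rw [hgtsup, hgsup, hrpow]
      calc Real.exp ((t + ε / 2) * Real.log r) * Real.exp (birkSum l g I.length xg)
          ≤ Real.exp (t * birkSum l h n xg) * Real.exp (birkSum l g I.length xg) :=
            mul_le_mul_of_nonneg_right (Real.exp_le_exp.2 (hpt xg hxgS).1) (Real.exp_pos _).le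
        _ = Real.exp (birkSum l (fun x => g x + t * h x) I.length xg) := by
            rw [← Real.exp_add, birk_add, ← hn]; ring_nf
        _ ≤ Real.exp (birkSum l (fun x => g x + t * h x) I.length xgt) := hgtmax xg hxgS
    · rw [hgtsup, hgsup, hrpow]
      calc Real.exp (birkSum l (fun x => g x + t * h x) I.length xgt)
          = Real.exp (birkSum l g I.length xgt) * Real.exp (t * birkSum l h n xgt) := by
            rw [← Real.exp_add, birk_add]
        _ ≤ Real.exp (birkSum l g I.length xgt) * Real.exp ((t - ε / 2) * Real.log r) :=
            mul_le_mul_of_nonneg_left (Real.exp_le_exp.2 (hpt xgt hxgtS).2) (Real.exp_pos _).le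
        _ ≤ Real.exp (birkSum l g I.length xg) * Real.exp ((t - ε / 2) * Real.log r) :=
            mul_le_mul_of_nonneg_right (hgmax xgt hxgtS) (Real.exp_pos _).le
        _ = Real.exp ((t - ε / 2) * Real.log r) * Real.exp (birkSum l g I.length xg) :=
            mul_comm _ _
  -- sum up
  have hsg : Summable (fun I : wordsAt l X h r => supExp l X g I.1) := Summable.of_finite
  have hsgt : Summable (fun I : wordsAt l X h r =>
      supExp l X (fun x => g x + t * h x) I.1) := Summable.of_finite
  constructor
  · rw [← tsum_mul_left]
    exact Summable.tsum_le_tsum (fun I => (hterm I.1 I.2).1) (hsg.mul_left _) hsgt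
  · rw [← tsum_mul_left]
    exact Summable.tsum_le_tsum (fun I => (hterm I.1 I.2).2) hsgt (hsg.mul_left _)
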